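/- Let K be a field, k and n natural numbers, and V : Fin k → Type a family of K-vector spaces. Then there is a K-linear equivalence between the n-th exterior power of the direct sum and the graded decomposition: ⋀^n_K (Π i : Fin k, V i) ≃ ⨁_{p : {p : Fin k → ℕ // ∑ i, p i = n}} ⨂_{i : Fin k} ⋀^{p i}_K (V i). -/

import Mathlib

open scoped TensorProduct DirectSum

noncomputable section AuxEPDS

open ExteriorAlgebra

variable {K : Type*} [Field K]

/-- An arbitrary linear order on any type. -/
noncomputable def auxArbLO (α : Type*) : LinearOrder α :=
  IsWellOrder.linearOrder WellOrderingRel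

/-- Linear independence from a dual family. -/
theorem auxLIofDual {ι : Type*} [DecidableEq ι] {N : Type*} [AddCommGroup N] [Module K N]
    (v : ι → N) (f : ι → (N →ₗ[K] K))
    (h : ∀ i j, f i (v j) = if j = i then 1 else 0) : LinearIndependent K v := by
  classical
  rw [linearIndependent_iff]
  intro l hl
  ext i
  have h2 := congrArg (f i) hl
  rw [Finsupp.linearCombination_apply, map_finsuppSum, map_zero] at h2
  simp only [map_smul, h, smul_eq_mul, mul_ite, mul_one, mul_zero] at h2
  rw [Finsupp.sum_ite_eq' l i (fun _ c => c)] at h2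
  by_cases hmem : i ∈ l.support
  · rw [if_pos hmem] at h2; simpa using h2
  · simpa using Finsupp.notMem_support_iff.mp hmem

section Ext

variable {M : Type*} [AddCommGroup M] [Module K M]
variable {I : Type*} [LinearOrder I] (b : Module.Basis I K M) (n : ℕ)

/-- Wedge products of basis vectors indexed by size-`n` finsets. -/
def auxWedgeB (s : {s : Finset I // s.card = n}) : ExteriorAlgebra K M :=
  ιMulti K n fun j => b (s.1.orderIsoOfFin s.2 j)

/-- The determinant-of-coordinates alternating form attached to `s`. -/
def auxDetForm (s : {s : Finset I // s.card = n}) : M [⋀^Fin n]→ₗ[K] K :=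
  (Matrix.detRowAlternating).compLinearMap
    (LinearMap.pi fun i => b.coord (s.1.orderIsoOfFin s.2 i))

theorem auxDetForm_eval (s t : {s : Finset I // s.card = n}) :
    auxDetForm b n s (fun j => b (t.1.orderIsoOfFin t.2 j)) = if t = s then 1 else 0 := by
  classical
  rw [auxDetForm, AlternatingMap.compLinearMap_apply]
  have hmat : Matrix.detRowAlternating
      (fun j => (LinearMap.pi fun i => b.coord (s.1.orderIsoOfFin s.2 i))
        (b (t.1.orderIsoOfFin t.2 j)))
      = Matrix.det (Matrix.of fun j i =>
          b.repr (b (t.1.orderIsoOfFin t.2 j)) (s.1.orderIsoOfFin s.2 i)) := rfl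
  rw [hmat]
  split_ifs with h
  · subst h
    have : (Matrix.of fun j i =>
        b.repr (b (t.1.orderIsoOfFin t.2 j)) (t.1.orderIsoOfFin t.2 i)) = 1 := by
      ext j i
      rw [Matrix.of_apply, Module.Basis.repr_self_apply, Matrix.one_apply]
      by_cases hji : j = i
      · subst hji; simp
      · rw [if_neg hji, if_neg]
        intro hc
        exact hji (by
          have := Subtype.ext hc
          exact (t.1.orderIsoOfFin t.2).injective this)
    rw [this, Matrix.det_one]
  · have hne : ¬ (s.1 : Finset I) ⊆ t.1 := by
      intro hsub
      exact h (Subtype.ext ((Finset.eq_of_subset_of_card_le hsub (by rw [s.2, t.2])).symm))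
    obtain ⟨x, hxs, hxt⟩ := Finset.not_subset.mp hne
    apply Matrix.det_eq_zero_of_column_eq_zero ((s.1.orderIsoOfFin s.2).symm ⟨x, hxs⟩)
    intro j
    rw [Matrix.of_apply, Module.Basis.repr_self_apply, if_neg]
    intro hc
    apply hxt
    have : ((s.1.orderIsoOfFin s.2) ((s.1.orderIsoOfFin s.2).symm ⟨x, hxs⟩) : I) = x := by
      rw [OrderIso.apply_symm_apply]
    rw [this] at hc
    rw [← hc]
    exact (t.1.orderIsoOfFin t.2 j).2

theorem auxWedgeB_li : LinearIndependent K (auxWedgeB b n) := by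
  classical
  apply auxLIofDual _ (fun s =>
    liftAlternating (R := K)
      (Function.update (fun i => (0 : M [⋀^Fin i]→ₗ[K] K)) n (auxDetForm b n s)))
  intro s t
  rw [auxWedgeB, liftAlternating_apply_ιMulti, Function.update_self]
  exact auxDetForm_eval b n s t

theorem auxιMulti_basis_mem (r : Fin n → I) :
    ιMulti K n (fun j => b (r j)) ∈ Submodule.span K (Set.range (auxWedgeB b n)) := by
  classical
  by_cases hr : Function.Injective r
  · set s : Finset I := Finset.univ.image r with hs
    have hcard : s.card = n := by
      rw [hs, Finset.card_image_of_injective _ hr, Finset.card_univ, Fintype.card_fin]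
    have hmem : ∀ j, r j ∈ s := fun j => Finset.mem_image_of_mem r (Finset.mem_univ j)
    set e : Fin n → Fin n := fun j => (s.orderIsoOfFin hcard).symm ⟨r j, hmem j⟩ with he
    have hinj : Function.Injective e := by
      intro a c hac
      apply hr
      have := (s.orderIsoOfFin hcard).symm.injective.eq_iff.mp hac
      exact congrArg Subtype.val this
    set σ : Equiv.Perm (Fin n) := Equiv.ofBijective e (Finite.injective_iff_bijective.mp hinj)
      with hσ
    have key : ιMulti K n (fun j => b (r j))
        = Equiv.Perm.sign σ • auxWedgeB b n ⟨s, hcard⟩ := by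
      rw [auxWedgeB, ← AlternatingMap.map_perm]
      congr 1
      funext j
      have : ((s.orderIsoOfFin hcard) (σ j) : I) = r j := by
        rw [hσ]
        show ((s.orderIsoOfFin hcard) (e j) : I) = r j
        rw [he]
        rw [OrderIso.apply_symm_apply]
      simp only [Function.comp_apply, this]
    rw [key]
    rcases Int.units_eq_one_or (Equiv.Perm.sign σ) with hsig | hsig
    · rw [hsig, one_smul]
      exact Submodule.subset_span ⟨_, rfl⟩
    · rw [hsig]
      rw [Units.neg_smul, one_smul]
      exact Submodule.neg_mem _ (Submodule.subset_span ⟨_, rfl⟩)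
  · have hni : ¬ Function.Injective (fun j => b (r j)) := fun hc =>
      hr (Function.Injective.of_comp (f := b) hc)
    rw [(ιMulti K n).map_eq_zero_of_not_injective _ hni]
    exact Submodule.zero_mem _

theorem auxWedgeB_span :
    Submodule.span K (Set.range (auxWedgeB b n)) = ⋀[K]^n M := by
  classical
  refine le_antisymm (Submodule.span_le.mpr ?_) ?_
  · rintro _ ⟨s, rfl⟩
    exact ιMulti_range K n ⟨_, rfl⟩
  · rw [← ιMulti_span_fixedDegree, Submodule.span_le]
    rintro _ ⟨v, rfl⟩
    have hv : v = fun j => ∑ i ∈ (b.repr (v j)).support, b.repr (v j) i • b i := by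
      funext j
      conv_lhs => rw [← b.linearCombination_repr (v j)]
      rw [Finsupp.linearCombination_apply, Finsupp.sum]
    rw [hv]
    show (ιMulti K n).toMultilinearMap
        (fun j => ∑ i ∈ (b.repr (v j)).support, b.repr (v j) i • b i)
      ∈ Submodule.span K (Set.range (auxWedgeB b n))
    rw [(ιMulti K n (M := M)).toMultilinearMap.map_sum_finset
      (fun j x => b.repr (v j) x • b x) (fun j => (b.repr (v j)).support)]
    apply Submodule.sum_mem
    intro r _
    have : (ιMulti K n (M := M)).toMultilinearMap (fun j => b.repr (v j) (r j) • b (r j))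
        = (∏ j, b.repr (v j) (r j)) • (ιMulti K n).toMultilinearMap (fun j => b (r j)) :=
      (ιMulti K n (M := M)).toMultilinearMap.map_smul_univ _ _
    rw [this]
    exact Submodule.smul_mem _ _ (auxιMulti_basis_mem b n r)

/-- A basis of the `n`-th exterior power indexed by size-`n` finsets of basis indices. -/
def auxExtBasis : Module.Basis {s : Finset I // s.card = n} K (⋀[K]^n M) :=
  (Module.Basis.span (auxWedgeB_li b n)).map (LinearEquiv.ofEq _ _ (auxWedgeB_span b n))

end Ext

section Tensor

open PiTensorProduct

variable {k : ℕ} {W : Fin k → Type*} [∀ i, AddCommGroup (W i)] [∀ i, Module K (W i)]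
  {A : Fin k → Type*} (bw : ∀ i, Module.Basis (A i) K (W i))

def auxTprodB (p : ∀ i, A i) : ⨂[K] i, W i := tprod K fun i => bw i (p i)

theorem auxTprodB_li : LinearIndependent K (auxTprodB bw) := by
  classical
  apply auxLIofDual _ (fun p => PiTensorProduct.lift
    ((MultilinearMap.mkPiAlgebra K (Fin k) K).compLinearMap fun i => (bw i).coord (p i)))
  intro p q
  rw [auxTprodB, PiTensorProduct.lift.tprod, MultilinearMap.compLinearMap_apply,
    MultilinearMap.mkPiAlgebra_apply]
  by_cases h : q = p
  · subst h
    rw [if_pos rfl]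
    apply Finset.prod_eq_one
    intro i _
    rw [Module.Basis.coord_apply, Module.Basis.repr_self_apply, if_pos rfl]
  · rw [if_neg h]
    obtain ⟨i, hi⟩ := Function.ne_iff.mp h
    exact Finset.prod_eq_zero (Finset.mem_univ i)
      (by rw [Module.Basis.coord_apply, Module.Basis.repr_self_apply, if_neg hi])

theorem auxTprodB_span : ⊤ ≤ Submodule.span K (Set.range (auxTprodB bw)) := by
  classical
  rw [← PiTensorProduct.span_tprod_eq_top (R := K) (s := W), Submodule.span_le]
  rintro _ ⟨v, rfl⟩
  have hv : v = fun i => ∑ x ∈ ((bw i).repr (v i)).support, (bw i).repr (v i) x • bw i x := by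
    funext i
    conv_lhs => rw [← (bw i).linearCombination_repr (v i)]
    rw [Finsupp.linearCombination_apply, Finsupp.sum]
  rw [hv]
  rw [(tprod K (s := W)).map_sum_finset
    (fun i x => (bw i).repr (v i) x • bw i x) (fun i => ((bw i).repr (v i)).support)]
  apply Submodule.sum_mem
  intro r _
  have : (tprod K (s := W)) (fun i => (bw i).repr (v i) (r i) • bw i (r i))
      = (∏ i, (bw i).repr (v i) (r i)) • (tprod K (s := W)) (fun i => bw i (r i)) :=
    (tprod K (s := W)).map_smul_univ _ _
  rw [this]
  exact Submodule.smul_mem _ _ (Submodule.subset_span ⟨r, rfl⟩)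

/-- A basis of a finite tensor product from bases of the factors. -/
def auxPiTensorBasis : Module.Basis (∀ i, A i) K (⨂[K] i, W i) :=
  Module.Basis.mk (auxTprodB_li bw) (auxTprodB_span bw)

end Tensor

end AuxEPDS

noncomputable section AuxEPDS2

variable {k n : ℕ} {A : Fin k → Type*}

theorem auxSigmaExt {x y : Σ p : {p : Fin k → ℕ // ∑ i, p i = n},
      ∀ i, {t : Finset (A i) // t.card = p.1 i}}
    (h : ∀ i, ((x.2 i : Finset (A i))) = (y.2 i : Finset (A i))) : x = y := by
  obtain ⟨⟨p, hp⟩, u⟩ := x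
  obtain ⟨⟨q, hq⟩, v⟩ := y
  obtain rfl : p = q := funext fun i => by
    have hu : (u i).1.card = p i := (u i).2
    have hv : (v i).1.card = q i := (v i).2
    rw [← hu, ← hv]
    exact congrArg Finset.card (h i)
  congr 1
  exact funext fun i => Subtype.ext (h i)

theorem auxSigmaCard (s : Finset (Σ i : Fin k, A i)) :
    ∑ i, (s.preimage (Sigma.mk i) sigma_mk_injective.injOn).card = s.card := by
  classical
  rw [← Finset.card_sigma, Finset.sigma_preimage_mk_of_subset _ (Finset.subset_univ _)]

def auxFinsetSigmaEquiv :
    {s : Finset (Σ i : Fin k, A i) // s.card = n} ≃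
      Σ p : {p : Fin k → ℕ // ∑ i, p i = n}, ∀ i, {t : Finset (A i) // t.card = p.1 i} where
  toFun s := ⟨⟨fun i => (s.1.preimage (Sigma.mk i) sigma_mk_injective.injOn).card,
      by rw [auxSigmaCard, s.2]⟩,
      fun i => ⟨s.1.preimage (Sigma.mk i) sigma_mk_injective.injOn, rfl⟩⟩
  invFun x := ⟨Finset.univ.sigma fun i => (x.2 i).1, by
      rw [Finset.card_sigma, Finset.sum_congr rfl fun i _ => (x.2 i).2]
      exact x.1.2⟩
  left_inv s := by
    classical
    exact Subtype.ext (Finset.sigma_preimage_mk_of_subset _ (Finset.subset_univ _))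
  right_inv x := auxSigmaExt fun i => by
    ext a
    simp [Finset.mem_preimage, Finset.mem_sigma]

end AuxEPDS2

/-- The `n`-th exterior power of a finite direct sum of `K`-vector spaces decomposes as
the direct sum, over all `p : Fin k → ℕ` with `∑ i, p i = n`, of the tensor products of
the `p i`-th exterior powers. -/
theorem exteriorPower_directSum_decomposition (K : Type*) [Field K] (k n : ℕ)
    (V : Fin k → Type*) [∀ i, AddCommGroup (V i)] [∀ i, Module K (V i)] :
    Nonempty
      ((⋀[K]^n (Π i : Fin k, V i)) ≃ₗ[K]
        ⨁ p : {p : Fin k → ℕ // ∑ i, p i = n},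
          ⨂[K] i : Fin k, ⋀[K]^(p.1 i) (V i)) := by
  classical
  letI : ∀ i, LinearOrder (Module.Basis.ofVectorSpaceIndex K (V i)) := fun i => auxArbLO _
  letI : LinearOrder (Σ i, Module.Basis.ofVectorSpaceIndex K (V i)) := auxArbLO _
  let bV : ∀ i, Module.Basis (Module.Basis.ofVectorSpaceIndex K (V i)) K (V i) :=
    fun i => Module.Basis.ofVectorSpace K (V i)
  let bL : Module.Basis {s : Finset (Σ i, Module.Basis.ofVectorSpaceIndex K (V i)) // s.card = n} K
      (⋀[K]^n (Π i, V i)) := auxExtBasis (Pi.basis bV) n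
  let bR : Module.Basis (Σ p : {p : Fin k → ℕ // ∑ i, p i = n},
      ∀ i, {t : Finset (Module.Basis.ofVectorSpaceIndex K (V i)) // t.card = p.1 i}) K
      (⨁ p : {p : Fin k → ℕ // ∑ i, p i = n}, ⨂[K] i, ⋀[K]^(p.1 i) (V i)) :=
    DFinsupp.basis fun p => auxPiTensorBasis (fun i => auxExtBasis (bV i) (p.1 i))
  exact ⟨bL.equiv bR auxFinsetSigmaEquiv⟩
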